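/- arXiv:0804.0292 — 2 statements merged into one kernel-verified Lean document; each statement's English description precedes it below -/
import Mathlib

section
/- For any real symmetric positive semidefinite n×n matrix Z and any orthogonal projection matrix p (i.e., p² = p and pᵀ = p), one has tr((pZ)²) ≤ tr(pZ²), with equality if and only if Z commutes with p. -/
open Matrix

lemma trace_transpose_mul_self_nonneg {n : ℕ} (A : Matrix (Fin n) (Fin n) ℝ) :
    0 ≤ Matrix.trace (Aᵀ * A) := by
  rw [Matrix.trace]
  refine Finset.sum_nonneg fun i _ => ?_
  simp only [Matrix.diag_apply, Matrix.mul_apply, Matrix.transpose_apply]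
  exact Finset.sum_nonneg fun j _ => mul_self_nonneg _

lemma trace_transpose_mul_self_eq_zero {n : ℕ} (A : Matrix (Fin n) (Fin n) ℝ) :
    Matrix.trace (Aᵀ * A) = 0 ↔ A = 0 := by
  constructor
  · intro h
    ext j i
    have hnn : ∀ i ∈ Finset.univ, (0:ℝ) ≤ (Aᵀ * A) i i := fun i _ => by
      simp only [Matrix.mul_apply, Matrix.transpose_apply]
      exact Finset.sum_nonneg fun j _ => mul_self_nonneg _
    have h1 := (Finset.sum_eq_zero_iff_of_nonneg hnn).mp h i (Finset.mem_univ i)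
    simp only [Matrix.mul_apply, Matrix.transpose_apply] at h1
    have h2 := (Finset.sum_eq_zero_iff_of_nonneg
      (fun j _ => mul_self_nonneg (A j i))).mp h1 j (Finset.mem_univ j)
    have := mul_self_eq_zero.mp h2
    simpa using this
  · intro h; simp [h]

/-- For a real symmetric positive semidefinite matrix `Z` and an orthogonal projection `p`,
`tr((pZ)²) ≤ tr(pZ²)`, with equality iff `Z` commutes with `p`. -/
theorem stmt1 (n : ℕ) (Z p : Matrix (Fin n) (Fin n) ℝ)
    (hZ : Z.PosSemidef) (hpsym : pᵀ = p) (hpidem : p * p = p) :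
    Matrix.trace ((p * Z) ^ 2) ≤ Matrix.trace (p * Z ^ 2) ∧
    (Matrix.trace ((p * Z) ^ 2) = Matrix.trace (p * Z ^ 2) ↔ Z * p = p * Z) := by
  have hZsym : Zᵀ = Z := by
    have := hZ.1
    rw [← Matrix.conjTranspose_eq_transpose_of_trivial]; exact this
  set M : Matrix (Fin n) (Fin n) ℝ := Z * p - p * Z * p with hMdef
  have hMT : Mᵀ = p * Z - p * Z * p := by
    rw [hMdef, Matrix.transpose_sub, Matrix.transpose_mul, Matrix.transpose_mul,
      Matrix.transpose_mul, hpsym, hZsym, mul_assoc]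
  have hMM : Mᵀ * M = p * Z * Z * p - p * Z * p * Z * p := by
    rw [hMT, hMdef]
    have : (p * Z - p * Z * p) * (Z * p - p * Z * p)
        = p * Z * Z * p - p * Z * (p * Z * p) - (p * Z * p * Z * p - p * Z * (p * (p * (Z * p)))) := by
      noncomm_ring
    rw [this]
    have hp : p * (p * (Z * p)) = p * (Z * p) := by rw [← mul_assoc, hpidem]
    rw [hp]
    noncomm_ring
  have ht1 : Matrix.trace (p * Z * Z * p) = Matrix.trace (p * Z ^ 2) := by
    rw [Matrix.trace_mul_comm (p * Z * Z) p, ← mul_assoc, ← mul_assoc, hpidem, pow_two,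
      mul_assoc]
  have ht2 : Matrix.trace (p * Z * p * Z * p) = Matrix.trace ((p * Z) ^ 2) := by
    rw [Matrix.trace_mul_comm (p * Z * p * Z) p, pow_two]
    have : p * (p * Z * p * Z) = p * Z * (p * Z) := by
      rw [← mul_assoc, ← mul_assoc, ← mul_assoc, hpidem, mul_assoc]
    rw [this]
  have key : Matrix.trace (Mᵀ * M) = Matrix.trace (p * Z ^ 2) - Matrix.trace ((p * Z) ^ 2) := by
    rw [hMM, Matrix.trace_sub, ht1, ht2]
  have hnn := trace_transpose_mul_self_nonneg M
  constructor
  · linarith [key ▸ hnn]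
  · rw [show (Matrix.trace ((p * Z) ^ 2) = Matrix.trace (p * Z ^ 2)) ↔
        Matrix.trace (Mᵀ * M) = 0 by rw [key]; constructor <;> intro h <;> linarith,
      trace_transpose_mul_self_eq_zero]
    constructor
    · intro h
      have hzp : Z * p = p * Z * p := by
        have := sub_eq_zero.mp h
        exact this
      have : (Z * p)ᵀ = (p * Z * p)ᵀ := by rw [hzp]
      rw [Matrix.transpose_mul, Matrix.transpose_mul, Matrix.transpose_mul, hpsym, hZsym] at this
      calc Z * p = p * Z * p := hzp
        _ = p * (Z * p) := by rw [mul_assoc]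
        _ = p * Z := this.symm
    · intro h
      have : p * Z * p = Z * p := by rw [← h, mul_assoc, hpidem]
      rw [hMdef, this, sub_self]
end

section
/- Let h₁, …, hₙ be positive reals with h₁ ≤ ⋯ ≤ hₙ, and suppose ∏_{i=1}^n h_i ≤ C for some constant C > 0. Then for any partition λ of m with at most n parts and conjugate λ* having parts λ*₁ ≥ ⋯ ≥ λ*_t, one has ∏_{ℓ=1}^{t} h_ℓ^{λ*_ℓ} ≤ C^{m/n}. -/
open Finset

/-- A downward-closed finset of naturals is an initial segment. -/
private lemma downset_eq_range (S : Finset ℕ)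
    (hdc : ∀ x ∈ S, ∀ y, y ≤ x → y ∈ S) : S = Finset.range S.card := by
  ext ℓ
  simp only [Finset.mem_range]
  constructor
  · intro hl
    have hsub : Finset.range (ℓ + 1) ⊆ S := by
      intro y hy
      exact hdc ℓ hl y (Nat.lt_succ_iff.mp (Finset.mem_range.mp hy))
    have := Finset.card_le_card hsub
    simpa using this
  · intro hl
    by_contra hns
    have hsub : S ⊆ Finset.range ℓ := by
      intro x hx
      rw [Finset.mem_range]
      by_contra hxl
      exact hns (hdc x hx ℓ (Nat.le_of_not_lt hxl))
    have := Finset.card_le_card hsub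
    simp only [Finset.card_range] at this
    omega

/-- Key lemma: the product of the `s` smallest among `n` increasing positive numbers
whose total product is at most `C` is at most `C^(s/n)`. -/
private lemma key_lemma (n s : ℕ) (hn : 0 < n) (hs : s ≤ n) (H : ℕ → ℝ)
    (hpos : ∀ i, i < n → 0 < H i) (hmono : ∀ i j, i ≤ j → j < n → H i ≤ H j)
    (C : ℝ) (hC : 0 < C) (hprod : ∏ i ∈ Finset.range n, H i ≤ C) :
    ∏ i ∈ Finset.range s, H i ≤ C ^ ((s : ℝ) / n) := by
  have hPpos : 0 < ∏ i ∈ Finset.range s, H i :=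
    Finset.prod_pos fun i hi => hpos i (lt_of_lt_of_le (Finset.mem_range.mp hi) hs)
  have hQpos : 0 < ∏ i ∈ Finset.range n, H i :=
    Finset.prod_pos fun i hi => hpos i (Finset.mem_range.mp hi)
  have hstep : (∏ i ∈ Finset.range s, H i) ^ n ≤ (∏ i ∈ Finset.range n, H i) ^ s := by
    rcases eq_or_lt_of_le hs with rfl | hs'
    · exact le_refl _
    · have hsplit : ∏ i ∈ Finset.range n, H i
          = (∏ i ∈ Finset.range s, H i) * ∏ i ∈ Finset.Ico s n, H i := by
        rw [Finset.range_eq_Ico, Finset.range_eq_Ico, ← Finset.prod_Ico_consecutive _ (Nat.zero_le s) hs]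
      have h1 : (∏ i ∈ Finset.range s, H i) ^ (n - s) ≤ (H s) ^ ((n - s) * s) := by
        rw [← Finset.prod_pow]
        calc ∏ i ∈ Finset.range s, H i ^ (n - s)
            ≤ ∏ _i ∈ Finset.range s, H s ^ (n - s) := by
              apply Finset.prod_le_prod
              · intro i hi
                exact pow_nonneg (hpos i (lt_of_lt_of_le (Finset.mem_range.mp hi) hs)).le _
              · intro i hi
                exact pow_le_pow_left₀
                  (hpos i (lt_of_lt_of_le (Finset.mem_range.mp hi) hs)).le
                  (hmono i s (Nat.le_of_lt (Finset.mem_range.mp hi)) hs') _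
          _ = (H s) ^ ((n - s) * s) := by
              rw [Finset.prod_const, Finset.card_range, ← pow_mul]
      have h2 : (H s) ^ ((n - s) * s) ≤ (∏ i ∈ Finset.Ico s n, H i) ^ s := by
        rw [← Finset.prod_pow]
        calc (H s) ^ ((n - s) * s) = ∏ _i ∈ Finset.Ico s n, H s ^ s := by
              rw [Finset.prod_const, Nat.card_Ico, ← pow_mul, Nat.mul_comm]
          _ ≤ ∏ i ∈ Finset.Ico s n, H i ^ s := by
              apply Finset.prod_le_prod
              · intro i _
                exact pow_nonneg (hpos s hs').le _
              · intro i hi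
                obtain ⟨hi1, hi2⟩ := Finset.mem_Ico.mp hi
                exact pow_le_pow_left₀ (hpos s hs').le (hmono s i hi1 hi2) _
      have hmid := h1.trans h2
      calc (∏ i ∈ Finset.range s, H i) ^ n
          = (∏ i ∈ Finset.range s, H i) ^ s * (∏ i ∈ Finset.range s, H i) ^ (n - s) := by
            rw [← pow_add]; congr 1; omega
        _ ≤ (∏ i ∈ Finset.range s, H i) ^ s * (∏ i ∈ Finset.Ico s n, H i) ^ s :=
            mul_le_mul_of_nonneg_left hmid (pow_nonneg hPpos.le _)
        _ = (∏ i ∈ Finset.range n, H i) ^ s := by rw [hsplit, mul_pow]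
  have h2 : (∏ i ∈ Finset.range s, H i) ^ n ≤ C ^ s :=
    hstep.trans (pow_le_pow_left₀ hQpos.le hprod s)
  have h3 := Real.rpow_le_rpow (pow_nonneg hPpos.le n) h2
    (by positivity : (0:ℝ) ≤ 1 / n)
  have hn' : (n : ℝ) ≠ 0 := Nat.cast_ne_zero.mpr hn.ne'
  rw [← Real.rpow_natCast (∏ i ∈ Finset.range s, H i) n, ← Real.rpow_natCast C s,
    ← Real.rpow_mul hPpos.le, ← Real.rpow_mul hC.le, mul_one_div, div_self hn',
    Real.rpow_one, mul_one_div] at h3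
  exact h3

private lemma prod_rpow_const {C : ℝ} (hC : 0 < C) (s : Finset ℕ) (f : ℕ → ℝ) :
    ∏ k ∈ s, C ^ f k = C ^ (∑ k ∈ s, f k) := by
  induction s using Finset.induction_on with
  | empty => simp
  | insert _ _ h ih => rw [Finset.prod_insert h, Finset.sum_insert h, Real.rpow_add hC, ih]

/-- If `0 < h₁ ≤ ⋯ ≤ hₙ` with `∏ h_i ≤ C`, and `μ₁ ≥ ⋯ ≥ μ_t` are the conjugate parts
(each `≤ n`, `t ≤ n`) of a partition of `m`, then `∏_{ℓ≤t} h_ℓ^{μ_ℓ} ≤ C^{m/n}`. -/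
theorem stmt16 (n t m : ℕ) (hn : 0 < n) (ht : t ≤ n) (h : Fin n → ℝ)
    (hpos : ∀ i, 0 < h i) (hmono : Monotone h)
    (C : ℝ) (hC : 0 < C) (hprod : ∏ i, h i ≤ C)
    (μ : Fin t → ℕ) (hanti : Antitone μ) (hμpos : ∀ ℓ, 0 < μ ℓ) (hμn : ∀ ℓ, μ ℓ ≤ n)
    (hsum : ∑ ℓ, μ ℓ = m) :
    (∏ ℓ : Fin t, h (Fin.castLE ht ℓ) ^ μ ℓ) ≤ C ^ ((m : ℝ) / n) := by
  classical
  set ν : ℕ → ℕ := fun ℓ => if hℓ : ℓ < t then μ ⟨ℓ, hℓ⟩ else 0 with hν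
  set H : ℕ → ℝ := fun i => if hi : i < n then h ⟨i, hi⟩ else 1 with hH
  have hHpos : ∀ i, i < n → 0 < H i := by
    intro i hi; simp only [hH, dif_pos hi]; exact hpos _
  have hHmono : ∀ i j, i ≤ j → j < n → H i ≤ H j := by
    intro i j hij hj
    have hi : i < n := lt_of_le_of_lt hij hj
    simp only [hH, dif_pos hi, dif_pos hj]
    exact hmono (show (⟨i, hi⟩ : Fin n) ≤ ⟨j, hj⟩ from hij)
  have hνle : ∀ ℓ, ν ℓ ≤ n := by
    intro ℓ
    by_cases hℓ : ℓ < t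
    · simp only [hν, dif_pos hℓ]; exact hμn _
    · simp only [hν, dif_neg hℓ]; exact Nat.zero_le _
  have hνanti : ∀ i j, i ≤ j → j < t → ν j ≤ ν i := by
    intro i j hij hj
    have hi : i < t := lt_of_le_of_lt hij hj
    simp only [hν, dif_pos hi, dif_pos hj]
    exact hanti (show (⟨i, hi⟩ : Fin t) ≤ ⟨j, hj⟩ from hij)
  have hLHS : (∏ ℓ : Fin t, h (Fin.castLE ht ℓ) ^ μ ℓ)
      = ∏ ℓ ∈ Finset.range t, H ℓ ^ ν ℓ := by
    rw [← Fin.prod_univ_eq_prod_range (fun ℓ => H ℓ ^ ν ℓ) t]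
    apply Finset.prod_congr rfl
    intro ℓ _
    have hℓt : (ℓ : ℕ) < t := ℓ.isLt
    have hℓn : (ℓ : ℕ) < n := lt_of_lt_of_le hℓt ht
    simp only [hH, hν, dif_pos hℓt, dif_pos hℓn]
    rfl
  have hHprod : ∏ i ∈ Finset.range n, H i ≤ C := by
    have heq : ∏ i ∈ Finset.range n, H i = ∏ i : Fin n, h i := by
      rw [← Fin.prod_univ_eq_prod_range (fun i => H i) n]
      apply Finset.prod_congr rfl
      intro i _
      simp only [hH, dif_pos i.isLt, Fin.eta]
    rw [heq]; exact hprod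
  set S : ℕ → Finset ℕ := fun k => (Finset.range t).filter (fun ℓ => k < ν ℓ) with hS
  have hfilter : ∀ M, M ≤ n → (Finset.range n).filter (fun k => k < M) = Finset.range M := by
    intro M hM
    ext k
    simp only [Finset.mem_filter, Finset.mem_range]
    omega
  have hswap : ∏ ℓ ∈ Finset.range t, H ℓ ^ ν ℓ = ∏ k ∈ Finset.range n, ∏ ℓ ∈ S k, H ℓ := by
    have h1 : ∀ ℓ ∈ Finset.range t,
        H ℓ ^ ν ℓ = ∏ k ∈ Finset.range n, if k < ν ℓ then H ℓ else 1 := by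
      intro ℓ _
      rw [Finset.prod_ite, Finset.prod_const, Finset.prod_const, one_pow, mul_one,
        hfilter _ (hνle ℓ), Finset.card_range]
    rw [Finset.prod_congr rfl h1, Finset.prod_comm]
    apply Finset.prod_congr rfl
    intro k _
    rw [Finset.prod_ite, Finset.prod_const_one, mul_one]
  have hdown : ∀ k, S k = Finset.range (S k).card := by
    intro k
    apply downset_eq_range
    intro x hx y hy
    simp only [hS, Finset.mem_filter, Finset.mem_range] at hx ⊢
    obtain ⟨hxt, hkx⟩ := hx
    exact ⟨lt_of_le_of_lt hy hxt, lt_of_lt_of_le hkx (hνanti y x hy hxt)⟩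
  have hcard_le : ∀ k, (S k).card ≤ n := by
    intro k
    calc (S k).card ≤ (Finset.range t).card := Finset.card_filter_le _ _
      _ = t := Finset.card_range t
      _ ≤ n := ht
  have hk : ∀ k ∈ Finset.range n, ∏ ℓ ∈ S k, H ℓ ≤ C ^ (((S k).card : ℝ) / n) := by
    intro k _
    conv_lhs => rw [hdown k]
    exact key_lemma n _ hn (hcard_le k) H hHpos hHmono C hC hHprod
  have hsum' : ∑ k ∈ Finset.range n, (S k).card = m := by
    have hcf : ∀ k, (S k).card = ∑ ℓ ∈ Finset.range t, if k < ν ℓ then 1 else 0 := by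
      intro k
      rw [hS]
      exact Finset.card_filter _ _
    have hνsum : ∑ ℓ ∈ Finset.range t, ν ℓ = m := by
      rw [← Fin.sum_univ_eq_sum_range (fun ℓ => ν ℓ) t, ← hsum]
      apply Finset.sum_congr rfl
      intro ℓ _
      simp only [hν, dif_pos ℓ.isLt]
    calc ∑ k ∈ Finset.range n, (S k).card
        = ∑ k ∈ Finset.range n, ∑ ℓ ∈ Finset.range t, if k < ν ℓ then 1 else 0 := by
          exact Finset.sum_congr rfl fun k _ => hcf k
      _ = ∑ ℓ ∈ Finset.range t, ∑ k ∈ Finset.range n, if k < ν ℓ then 1 else 0 :=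
          Finset.sum_comm
      _ = ∑ ℓ ∈ Finset.range t, ν ℓ := by
          apply Finset.sum_congr rfl
          intro ℓ _
          rw [← Finset.card_filter, hfilter _ (hνle ℓ), Finset.card_range]
      _ = m := hνsum
  calc (∏ ℓ : Fin t, h (Fin.castLE ht ℓ) ^ μ ℓ)
      = ∏ k ∈ Finset.range n, ∏ ℓ ∈ S k, H ℓ := hLHS.trans hswap
    _ ≤ ∏ k ∈ Finset.range n, C ^ (((S k).card : ℝ) / n) := by
        apply Finset.prod_le_prod
        · intro k _
          exact Finset.prod_nonneg fun ℓ hℓ => (hHpos ℓ (by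
            have := Finset.mem_filter.mp hℓ
            have := Finset.mem_range.mp this.1
            omega)).le
        · exact hk
    _ = C ^ (∑ k ∈ Finset.range n, ((S k).card : ℝ) / n) := prod_rpow_const hC _ _
    _ = C ^ ((m : ℝ) / n) := by
        rw [← Finset.sum_div, ← Nat.cast_sum, hsum']
end
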